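/- For any y with 0 ≤ y ≤ l ≤ m ≤ n, the string a^(l−y) b^y is a longest common subsequence of the strings a^(m−y) b^y and a^(l−y) b^(n+y−l) (where a, b are distinct symbols and x^k denotes k repetitions of x), and the number of its embeddings in this pair of strings is exactly C(m−y, l−y) · C(n+y−l, y). -/

import Mathlib

/-- `C` is a longest common subsequence of `A` and `B`. -/
def IsLCS {α : Type*} (A B C : List α) : Prop :=
  C.Sublist A ∧ C.Sublist B ∧ ∀ D : List α, D.Sublist A → D.Sublist B → D.length ≤ C.length

/-- The number of embeddings of the string `C` as a common subsequence of `A` and `B`: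
pairs of strictly increasing position sequences matching the characters of `C`. -/
noncomputable def EmbCount {α : Type*} (A B C : List α) : ℕ :=
  Nat.card {pq : (Fin C.length → Fin A.length) × (Fin C.length → Fin B.length) //
    StrictMono pq.1 ∧ StrictMono pq.2 ∧
      ∀ i, A.get (pq.1 i) = C.get i ∧ B.get (pq.2 i) = C.get i}

section Aux

set_option linter.unnecessarySimpa false

lemma cardSM (k n : ℕ) :
    Nat.card {f : Fin k → Fin n // StrictMono f} = n.choose k := by
  have e : {f : Fin k → Fin n // StrictMono f} ≃ {s : Finset (Fin n) // s.card = k} :=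
  { toFun := fun f => ⟨Finset.univ.image f.1, by
      rw [Finset.card_image_of_injective _ f.2.injective, Finset.card_univ, Fintype.card_fin]⟩
    invFun := fun s => ⟨s.1.orderEmbOfFin s.2, (s.1.orderEmbOfFin s.2).strictMono⟩
    left_inv := fun f => by
      apply Subtype.ext
      exact (Finset.orderEmbOfFin_unique _
        (fun x => Finset.mem_image_of_mem _ (Finset.mem_univ x)) f.2).symm
    right_inv := fun s => by
      apply Subtype.ext
      have := Finset.range_orderEmbOfFin s.1 s.2
      rw [← Finset.coe_inj, Finset.coe_image, Finset.coe_univ, Set.image_univ, this] }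
  rw [Nat.card_congr e, Nat.card_eq_fintype_card, Fintype.card_finset_len, Fintype.card_fin]

variable {c1 c2 d1 d2 : ℕ}

def Cond (c1 d1 : ℕ) {c2 d2 : ℕ} (p : Fin (c1+c2) → Fin (d1+d2)) : Prop :=
  StrictMono p ∧ ∀ i : Fin (c1+c2), ((p i : ℕ) < d1 ↔ (i : ℕ) < c1)

def fwd (p : {p : Fin (c1+c2) → Fin (d1+d2) // Cond c1 d1 p}) :
    {f : Fin c1 → Fin d1 // StrictMono f} × {g : Fin c2 → Fin d2 // StrictMono g} :=
  (⟨fun i => ⟨(p.1 (Fin.castAdd c2 i) : ℕ), by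
      refine (p.2.2 (Fin.castAdd c2 i)).2 ?_
      simpa using i.2⟩, by
    intro i j hij
    have hm : StrictMono p.1 := p.2.1
    have := hm (show Fin.castAdd c2 i < Fin.castAdd c2 j by
      rw [Fin.lt_def] at hij ⊢; simpa using hij)
    exact Fin.mk_lt_mk.mpr (Fin.lt_def.mp this)⟩,
   ⟨fun j => ⟨(p.1 (Fin.natAdd c1 j) : ℕ) - d1, by
      have h1 : ¬ ((p.1 (Fin.natAdd c1 j) : ℕ) < d1) := by rw [p.2.2]; simp
      have h2 : (p.1 (Fin.natAdd c1 j) : ℕ) < d1 + d2 := (p.1 _).2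
      omega⟩, by
    intro i j hij
    have h1 : ¬ ((p.1 (Fin.natAdd c1 i) : ℕ) < d1) := by rw [p.2.2]; simp
    have hm : StrictMono p.1 := p.2.1
    have := hm (show Fin.natAdd c1 i < Fin.natAdd c1 j by
      rw [Fin.lt_def] at hij ⊢; simpa using hij)
    rw [Fin.lt_def] at this
    refine Fin.mk_lt_mk.mpr ?_
    omega⟩)

def bwd (fg : {f : Fin c1 → Fin d1 // StrictMono f} × {g : Fin c2 → Fin d2 // StrictMono g}) :
    {p : Fin (c1+c2) → Fin (d1+d2) // Cond c1 d1 p} :=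
  ⟨fun k => if h : (k : ℕ) < c1 then Fin.castAdd d2 (fg.1.1 ⟨k, h⟩)
    else Fin.natAdd d1 (fg.2.1 ⟨(k : ℕ) - c1, by have := k.2; omega⟩), by
  constructor
  · intro k k' hkk'
    rw [Fin.lt_def] at hkk'
    by_cases hk : (k : ℕ) < c1 <;> by_cases hk' : (k' : ℕ) < c1 <;>
      simp only [dif_pos, dif_neg, hk, hk', reduceDIte, Fin.lt_def, Fin.coe_castAdd,
        Fin.coe_natAdd]
    · exact fg.1.2 (show (⟨k, hk⟩ : Fin c1) < ⟨k', hk'⟩ from hkk')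
    · have := (fg.1.1 ⟨k, hk⟩).2; omega
    · omega
    · have : (fg.2.1 ⟨(k : ℕ) - c1, by have := k.2; omega⟩ : ℕ)
          < (fg.2.1 ⟨(k' : ℕ) - c1, by have := k'.2; omega⟩ : ℕ) := by
        exact fg.2.2 (show ((k : ℕ) - c1) < ((k' : ℕ) - c1) from by omega)
      omega
  · intro i
    by_cases hi : (i : ℕ) < c1 <;>
      simp only [dif_pos, dif_neg, hi, reduceDIte, Fin.coe_castAdd, Fin.coe_natAdd,
        iff_true, iff_false]
    · exact (fg.1.1 ⟨i, hi⟩).2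
    · omega⟩

lemma cardCond (c1 c2 d1 d2 : ℕ) :
    Nat.card {p : Fin (c1+c2) → Fin (d1+d2) //
        StrictMono p ∧ ∀ i : Fin (c1+c2), ((p i : ℕ) < d1 ↔ (i : ℕ) < c1)}
      = d1.choose c1 * d2.choose c2 := by
  have : Nat.card {p : Fin (c1+c2) → Fin (d1+d2) //
        StrictMono p ∧ ∀ i : Fin (c1+c2), ((p i : ℕ) < d1 ↔ (i : ℕ) < c1)}
      = Nat.card ({f : Fin c1 → Fin d1 // StrictMono f}
          × {g : Fin c2 → Fin d2 // StrictMono g}) := by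
    apply Nat.card_congr
    refine ⟨fwd, bwd, ?_, ?_⟩
    · intro p
      apply Subtype.ext
      funext k
      apply Fin.ext
      by_cases hk : (k : ℕ) < c1
      · simp only [bwd, fwd, dif_pos hk, Fin.coe_castAdd]
        have he : Fin.castAdd c2 (⟨(k : ℕ), hk⟩ : Fin c1) = k := Fin.ext rfl
        rw [he]
      · simp only [bwd, fwd, dif_neg hk, Fin.coe_natAdd]
        have he : Fin.natAdd c1 (⟨(k : ℕ) - c1, by have := k.2; omega⟩ : Fin c2) = k :=
          Fin.ext (by simp; omega)
        rw [he]
        have h1 : ¬ ((p.1 k : ℕ) < d1) := by rw [p.2.2]; exact hk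
        omega
    · intro fg
      refine Prod.ext ?_ ?_ <;> apply Subtype.ext <;> funext i <;> apply Fin.ext
      · have hi : ((Fin.castAdd c2 i : Fin (c1+c2)) : ℕ) < c1 := by simpa using i.2
        simp only [fwd, bwd]
        rw [dif_pos hi]
        simp only [Fin.coe_castAdd, Fin.eta]
      · have hi : ¬ (((Fin.natAdd c1 i : Fin (c1+c2)) : ℕ) < c1) := by simp
        simp only [fwd, bwd]
        rw [dif_neg hi]
        simp only [Fin.coe_natAdd, Nat.add_sub_cancel_left, Fin.eta]
  rw [this, Nat.card_prod, cardSM, cardSM]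

lemma cardAux {n n' m m' : ℕ} (hn : n = n') (hm : m = m') (d1 c1 : ℕ) :
    Nat.card {p : Fin n → Fin m // StrictMono p ∧ ∀ i, ((p i : ℕ) < d1 ↔ (i : ℕ) < c1)} =
    Nat.card {p : Fin n' → Fin m' // StrictMono p ∧ ∀ i, ((p i : ℕ) < d1 ↔ (i : ℕ) < c1)} := by
  subst hn; subst hm; rfl

lemma getRep {α : Type*} (a b : α) {d1 d2 j : ℕ}
    (hj : j < (List.replicate d1 a ++ List.replicate d2 b).length) :
    (List.replicate d1 a ++ List.replicate d2 b)[j] = if j < d1 then a else b := by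
  by_cases h : j < d1
  · rw [if_pos h, List.getElem_append_left (by simpa using h), List.getElem_replicate]
  · rw [if_neg h, List.getElem_append_right (by simpa using h), List.getElem_replicate]

lemma cardEmbOne {α : Type*} {a b : α} (hab : a ≠ b) (c1 c2 d1 d2 : ℕ) :
    Nat.card {p : Fin (List.replicate c1 a ++ List.replicate c2 b).length →
        Fin (List.replicate d1 a ++ List.replicate d2 b).length //
      StrictMono p ∧ ∀ i, (List.replicate d1 a ++ List.replicate d2 b).get (p i)
        = (List.replicate c1 a ++ List.replicate c2 b).get i}
      = d1.choose c1 * d2.choose c2 := by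
  have hkey : ∀ (p : Fin (List.replicate c1 a ++ List.replicate c2 b).length →
      Fin (List.replicate d1 a ++ List.replicate d2 b).length) i,
      ((List.replicate d1 a ++ List.replicate d2 b).get (p i)
        = (List.replicate c1 a ++ List.replicate c2 b).get i)
        ↔ (((p i : ℕ) < d1) ↔ ((i : ℕ) < c1)) := by
    intro p i
    rw [List.get_eq_getElem, List.get_eq_getElem, getRep a b, getRep a b]
    by_cases hp : ((p i : ℕ) < d1) <;> by_cases hi : ((i : ℕ) < c1) <;>
      simp [hp, hi, hab, Ne.symm hab]
  rw [Nat.card_congr (Equiv.subtypeEquivRight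
    (fun p => and_congr_right (fun _ => forall_congr' (fun i => hkey p i)))),
    cardAux (show (List.replicate c1 a ++ List.replicate c2 b).length = c1 + c2 by simp)
      (show (List.replicate d1 a ++ List.replicate d2 b).length = d1 + d2 by simp) d1 c1,
    cardCond]

lemma embSplit {α : Type*} (A B C : List α) : EmbCount A B C =
    Nat.card {p : Fin C.length → Fin A.length //
      StrictMono p ∧ ∀ i, A.get (p i) = C.get i} *
    Nat.card {q : Fin C.length → Fin B.length //
      StrictMono q ∧ ∀ i, B.get (q i) = C.get i} := by
  rw [EmbCount, ← Nat.card_prod]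
  apply Nat.card_congr
  exact ⟨fun x => (⟨x.1.1, x.2.1, fun i => (x.2.2.2 i).1⟩, ⟨x.1.2, x.2.2.1, fun i => (x.2.2.2 i).2⟩),
         fun z => ⟨(z.1.1, z.2.1), z.1.2.1, z.2.2.1, fun i => ⟨z.1.2.2 i, z.2.2.2 i⟩⟩,
         fun x => rfl, fun z => rfl⟩

lemma subShape {α : Type*} {a b : α} {D : List α} {M Y : ℕ}
    (h : D.Sublist (List.replicate M a ++ List.replicate Y b)) :
    ∃ i j, i ≤ M ∧ j ≤ Y ∧ D = List.replicate i a ++ List.replicate j b := by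
  rw [List.sublist_append_iff] at h
  obtain ⟨l1, l2, rfl, h1, h2⟩ := h
  rw [List.sublist_replicate_iff] at h1 h2
  obtain ⟨i, hi, rfl⟩ := h1
  obtain ⟨j, hj, rfl⟩ := h2
  exact ⟨i, j, hi, hj, rfl⟩

lemma repLe {α : Type*} {a b : α} (hab : a ≠ b) {i L N : ℕ}
    (h : (List.replicate i a).Sublist (List.replicate L a ++ List.replicate N b)) :
    i ≤ L := by
  rw [List.sublist_append_iff] at h
  obtain ⟨l1, l2, he, h1, h2⟩ := h
  cases l2 with
  | nil =>
    rw [List.append_nil] at he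
    subst he
    exact (List.replicate_sublist_replicate a).1 h1
  | cons x t =>
    exfalso
    have hx1 : x ∈ List.replicate i a := he ▸ List.mem_append_right l1 (List.mem_cons_self : x ∈ x :: t)
    have hx2 : x ∈ List.replicate N b := h2.mem (List.mem_cons_self : x ∈ x :: t)
    rw [List.eq_of_mem_replicate hx1] at hx2
    exact hab (List.eq_of_mem_replicate hx2)

end Aux

theorem stmt9 {α : Type*} (a b : α) (hab : a ≠ b) (m n l y : ℕ)
    (hyl : y ≤ l) (hlm : l ≤ m) (hmn : m ≤ n) :
    IsLCS (List.replicate (m - y) a ++ List.replicate y b)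
        (List.replicate (l - y) a ++ List.replicate (n + y - l) b)
        (List.replicate (l - y) a ++ List.replicate y b) ∧
      EmbCount (List.replicate (m - y) a ++ List.replicate y b)
          (List.replicate (l - y) a ++ List.replicate (n + y - l) b)
          (List.replicate (l - y) a ++ List.replicate y b) =
        Nat.choose (m - y) (l - y) * Nat.choose (n + y - l) y := by
  constructor
  · refine ⟨?_, ?_, ?_⟩
    · exact ((List.replicate_sublist_replicate a).2 (by omega)).append (List.Sublist.refl _)
    · exact (List.Sublist.refl _).append ((List.replicate_sublist_replicate b).2 (by omega))
    · intro D hDA hDB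
      obtain ⟨i, j, hi, hj, rfl⟩ := subShape hDA
      have hiL : i ≤ l - y :=
        repLe hab (((List.sublist_append_left _ _).trans hDB))
      simp only [List.length_append, List.length_replicate]
      omega
  · rw [embSplit, cardEmbOne hab, cardEmbOne hab, Nat.choose_self, Nat.choose_self]
    ring
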